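/- Let 0 < α ≤ 2, let x₁,…,x_n ∈ ℝᵖ and y₁,…,y_n ∈ ℝ^q, and set a_{kl} = ‖x_k − x_l‖₂^α and b_{kl} = ‖y_k − y_l‖₂^α for k, l ∈ {1,…,n}, with double-centerings A and B. Then the empirical α-distance covariance is nonnegative: (1/n²) Σ_{k,l=1}^n A_{kl} B_{kl} ≥ 0. -/

import Mathlib

open Finset

section Aux
open MeasureTheory Set

lemma inner_pow_pd {n p : ℕ} (x : Fin n → EuclideanSpace ℝ (Fin p)) (d : Fin n → ℝ) (m : ℕ) :
    0 ≤ ∑ k, ∑ l, d k * d l * (inner ℝ (x k) (x l) : ℝ) ^ m := by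
  have hinner : ∀ k l : Fin n, (inner ℝ (x k) (x l) : ℝ) = ∑ i, x k i * x l i := by
    intro k l
    rw [PiLp.inner_apply]
    exact Finset.sum_congr rfl fun i _ => by
      simp [RCLike.inner_apply, mul_comm]
  have key : ∀ k l : Fin n, (inner ℝ (x k) (x l) : ℝ) ^ m
      = ∑ f : Fin m → Fin p, (∏ j, x k (f j)) * ∏ j, x l (f j) := by
    intro k l
    rw [hinner, Fintype.sum_pow]
    exact Finset.sum_congr rfl fun f _ => by rw [← Finset.prod_mul_distrib]
  have main : ∑ k, ∑ l, d k * d l * (inner ℝ (x k) (x l) : ℝ) ^ m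
      = ∑ f : Fin m → Fin p, (∑ k, d k * ∏ j, x k (f j)) ^ 2 := by
    have : ∀ f : Fin m → Fin p, (∑ k, d k * ∏ j, x k (f j)) ^ 2
        = ∑ k, ∑ l, (d k * ∏ j, x k (f j)) * (d l * ∏ j, x l (f j)) := by
      intro f; rw [sq, Fintype.sum_mul_sum]
    simp_rw [this, key, Finset.mul_sum]
    conv_lhs => enter [2, k]; rw [Finset.sum_comm]
    rw [Finset.sum_comm]
    refine Finset.sum_congr rfl fun f _ => Finset.sum_congr rfl fun k _ =>
      Finset.sum_congr rfl fun l _ => by ring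
  rw [main]
  exact Finset.sum_nonneg fun f _ => sq_nonneg _

lemma gauss_pd {n p : ℕ} (x : Fin n → EuclideanSpace ℝ (Fin p)) (c : Fin n → ℝ) {t : ℝ}
    (ht : 0 ≤ t) :
    0 ≤ ∑ k, ∑ l, c k * c l * Real.exp (-(‖x k - x l‖ ^ 2 * t)) := by
  have hexp : ∀ s : ℝ, Real.exp s = ∑' m : ℕ, s ^ m / m.factorial := by
    intro s
    rw [Real.exp_eq_exp_ℝ, NormedSpace.exp_eq_tsum_div]
  set e : Fin n → ℝ := fun k => c k * Real.exp (-(‖x k‖ ^ 2 * t)) with he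
  have hsplit : ∀ k l : Fin n, c k * c l * Real.exp (-(‖x k - x l‖ ^ 2 * t))
      = e k * e l * Real.exp (2 * t * (inner ℝ (x k) (x l) : ℝ)) := by
    intro k l
    have hr : ‖x k - x l‖ ^ 2 = ‖x k‖ ^ 2 - 2 * (inner ℝ (x k) (x l) : ℝ) + ‖x l‖ ^ 2 :=
      norm_sub_sq_real _ _
    have hmul : Real.exp (-(‖x k - x l‖ ^ 2 * t))
        = Real.exp (-(‖x k‖ ^ 2 * t)) * Real.exp (-(‖x l‖ ^ 2 * t))
          * Real.exp (2 * t * (inner ℝ (x k) (x l) : ℝ)) := by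
      rw [← Real.exp_add, ← Real.exp_add]
      congr 1
      rw [hr]; ring
    rw [hmul, he]; dsimp only; ring
  simp_rw [hsplit]
  have hprod : ∑ k, ∑ l, e k * e l * Real.exp (2 * t * (inner ℝ (x k) (x l) : ℝ))
      = ∑ kl : Fin n × Fin n, e kl.1 * e kl.2 * Real.exp (2 * t * (inner ℝ (x kl.1) (x kl.2) : ℝ)) :=
    (Fintype.sum_prod_type
      (fun kl : Fin n × Fin n => e kl.1 * e kl.2
        * Real.exp (2 * t * (inner ℝ (x kl.1) (x kl.2) : ℝ)))).symm
  rw [hprod]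
  have hterm : ∀ kl : Fin n × Fin n,
      e kl.1 * e kl.2 * Real.exp (2 * t * (inner ℝ (x kl.1) (x kl.2) : ℝ))
      = ∑' m : ℕ, e kl.1 * e kl.2 * ((2 * t * (inner ℝ (x kl.1) (x kl.2) : ℝ)) ^ m / m.factorial) := by
    intro kl
    rw [hexp, ← tsum_mul_left]
  simp_rw [hterm]
  rw [← Summable.tsum_finsetSum (fun kl _ => ((Real.summable_pow_div_factorial _).mul_left _))]
  refine tsum_nonneg fun m => ?_
  have h1 : ∀ kl : Fin n × Fin n,
      e kl.1 * e kl.2 * ((2 * t * (inner ℝ (x kl.1) (x kl.2) : ℝ)) ^ m / m.factorial)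
      = ((2 * t) ^ m / m.factorial) * (e kl.1 * e kl.2 * (inner ℝ (x kl.1) (x kl.2) : ℝ) ^ m) := by
    intro kl; rw [mul_pow]; ring
  simp_rw [h1, ← Finset.mul_sum]
  refine mul_nonneg (div_nonneg (pow_nonneg (by linarith) m) (Nat.cast_nonneg _)) ?_
  have := inner_pow_pd x e m
  rwa [← Fintype.sum_prod_type
    (f := fun kl : Fin n × Fin n => e kl.1 * e kl.2 * (inner ℝ (x kl.1) (x kl.2) : ℝ) ^ m)] at this

lemma cont_aux {β c : ℝ} :
    ContinuousOn (fun t : ℝ => (1 - Real.exp (-(c * t))) * t ^ (-β - 1)) (Ioi 0) := by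
  apply ContinuousOn.mul
  · exact (continuous_const.sub
      (Real.continuous_exp.comp (continuous_const.mul continuous_id).neg)).continuousOn
  · intro t ht
    exact (Real.continuousAt_rpow_const t _ (Or.inl (ne_of_gt (mem_Ioi.mp ht)))).continuousWithinAt

lemma integrable_aux {β : ℝ} (hβ0 : 0 < β) (hβ1 : β < 1) {c : ℝ} (hc : 0 ≤ c) :
    IntegrableOn (fun t : ℝ => (1 - Real.exp (-(c * t))) * t ^ (-β - 1)) (Ioi 0) := by
  have hsplit : Ioi (0:ℝ) = Ioc (0:ℝ) 1 ∪ Ioi (1:ℝ) := (Set.Ioc_union_Ioi_eq_Ioi zero_le_one).symm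
  rw [hsplit]
  apply IntegrableOn.union
  · -- on Ioc 0 1, dominate by c * t ^ (-β)
    have hint : IntegrableOn (fun t : ℝ => c * t ^ (-β)) (Ioc (0:ℝ) 1) := by
      have := @intervalIntegral.intervalIntegrable_rpow' 0 1 (-β) (by linarith)
      rw [intervalIntegrable_iff_integrableOn_Ioc_of_le zero_le_one] at this
      exact this.const_mul c
    refine Integrable.mono' hint ?_ ?_
    · exact (cont_aux.mono Ioc_subset_Ioi_self).aestronglyMeasurable measurableSet_Ioc
    · refine (ae_restrict_iff' measurableSet_Ioc).mpr (Filter.Eventually.of_forall ?_)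
      intro t ht
      obtain ⟨ht0, ht1⟩ := ht
      have hct : 0 ≤ c * t := mul_nonneg hc ht0.le
      have hexp1 : Real.exp (-(c * t)) ≤ 1 := Real.exp_le_one_iff.mpr (by linarith)
      have hexp2 : 1 - Real.exp (-(c * t)) ≤ c * t := by
        have := Real.add_one_le_exp (-(c * t))
        linarith
      have hpow : (0:ℝ) ≤ t ^ (-β - 1) := Real.rpow_nonneg ht0.le _
      rw [Real.norm_eq_abs, abs_of_nonneg (mul_nonneg (by linarith) hpow)]
      calc (1 - Real.exp (-(c * t))) * t ^ (-β - 1) ≤ (c * t) * t ^ (-β - 1) := by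
            exact mul_le_mul_of_nonneg_right hexp2 hpow
        _ = c * t ^ (-β) := by
            rw [mul_assoc]
            congr 1
            rw [← Real.rpow_one_add' (le_of_lt ht0) (by intro h; linarith)]
            norm_num
  · -- on Ioi 1, dominate by t ^ (-β - 1)
    have hint : IntegrableOn (fun t : ℝ => t ^ (-β - 1)) (Ioi (1:ℝ)) :=
      integrableOn_Ioi_rpow_of_lt (by linarith) one_pos
    refine Integrable.mono' hint ?_ ?_
    · exact (cont_aux.mono (Ioi_subset_Ioi zero_le_one)).aestronglyMeasurable measurableSet_Ioi
    · refine (ae_restrict_iff' measurableSet_Ioi).mpr (Filter.Eventually.of_forall ?_)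
      intro t ht
      have ht1 : (1:ℝ) < t := mem_Ioi.mp ht
      have hct : 0 ≤ c * t := mul_nonneg hc (by linarith)
      have hexp1 : Real.exp (-(c * t)) ≤ 1 := Real.exp_le_one_iff.mpr (by linarith)
      have hpow : (0:ℝ) ≤ t ^ (-β - 1) := Real.rpow_nonneg (by linarith) _
      rw [Real.norm_eq_abs, abs_of_nonneg (mul_nonneg (by linarith [Real.exp_pos (-(c*t))]) hpow)]
      nlinarith [Real.exp_pos (-(c * t))]

lemma I_pos {β : ℝ} (hβ0 : 0 < β) (hβ1 : β < 1) :
    0 < ∫ t in Ioi (0:ℝ), (1 - Real.exp (-t)) * t ^ (-β - 1) := by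
  have hint : IntegrableOn (fun t : ℝ => (1 - Real.exp (-t)) * t ^ (-β - 1)) (Ioi 0) := by
    have h := integrable_aux hβ0 hβ1 (c := 1) zero_le_one
    simpa using h
  have hnonneg : 0 ≤ᵐ[volume.restrict (Ioi (0:ℝ))]
      fun t : ℝ => (1 - Real.exp (-t)) * t ^ (-β - 1) := by
    refine (ae_restrict_iff' measurableSet_Ioi).mpr (Filter.Eventually.of_forall ?_)
    intro t ht
    have ht0 : 0 < t := mem_Ioi.mp ht
    have : Real.exp (-t) ≤ 1 := Real.exp_le_one_iff.mpr (by linarith)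
    exact mul_nonneg (by linarith) (Real.rpow_nonneg ht0.le _)
  rw [setIntegral_pos_iff_support_of_nonneg_ae hnonneg hint]
  have hsub : Ioi (0:ℝ) ⊆ Function.support fun t : ℝ => (1 - Real.exp (-t)) * t ^ (-β - 1) := by
    intro t ht
    have ht0 : 0 < t := mem_Ioi.mp ht
    have h1 : Real.exp (-t) < 1 := Real.exp_lt_one_iff.mpr (by linarith)
    have h2 : (0:ℝ) < t ^ (-β - 1) := Real.rpow_pos_of_pos ht0 _
    exact ne_of_gt (mul_pos (by linarith) h2)
  have : (Function.support fun t : ℝ => (1 - Real.exp (-t)) * t ^ (-β - 1)) ∩ Set.Ioi (0:ℝ) = Set.Ioi (0:ℝ) :=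
    inter_eq_self_of_subset_right hsub
  rw [this]
  simp [Real.volume_Ioi]

lemma scaling {β : ℝ} {s : ℝ} (hs : 0 < s) :
    ∫ t in Ioi (0:ℝ), (1 - Real.exp (-(s * t))) * t ^ (-β - 1)
      = s ^ β * ∫ u in Ioi (0:ℝ), (1 - Real.exp (-u)) * u ^ (-β - 1) := by
  have h := integral_comp_mul_left_Ioi
    (g := fun u : ℝ => (1 - Real.exp (-u)) * u ^ (-β - 1)) 0 hs
  rw [mul_zero] at h
  have h1 : s ^ (β + 1) * s ^ (-β - 1) = 1 := by
    rw [← Real.rpow_add hs]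
    norm_num
  have key : ∀ t ∈ Ioi (0:ℝ), (1 - Real.exp (-(s * t))) * t ^ (-β - 1)
      = s ^ (β + 1) * ((1 - Real.exp (-(s * t))) * (s * t) ^ (-β - 1)) := by
    intro t ht
    have ht0 : 0 < t := mem_Ioi.mp ht
    calc (1 - Real.exp (-(s * t))) * t ^ (-β - 1)
        = (s ^ (β + 1) * s ^ (-β - 1)) * ((1 - Real.exp (-(s * t))) * t ^ (-β - 1)) := by
          rw [h1, one_mul]
      _ = s ^ (β + 1) * ((1 - Real.exp (-(s * t))) * (s ^ (-β - 1) * t ^ (-β - 1))) := by ring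
      _ = s ^ (β + 1) * ((1 - Real.exp (-(s * t))) * (s * t) ^ (-β - 1)) := by
          rw [Real.mul_rpow hs.le ht0.le]
  rw [setIntegral_congr_fun measurableSet_Ioi key, integral_const_mul, h, smul_eq_mul,
    ← mul_assoc]
  congr 1
  rw [← Real.rpow_neg_one s, ← Real.rpow_add hs]
  norm_num

lemma rpow_rep {β : ℝ} (hβ0 : 0 < β) {r : ℝ} (hr : 0 ≤ r) :
    r ^ (2 * β) * (∫ u in Ioi (0:ℝ), (1 - Real.exp (-u)) * u ^ (-β - 1))
      = ∫ t in Ioi (0:ℝ), (1 - Real.exp (-(r ^ 2 * t))) * t ^ (-β - 1) := by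
  rcases eq_or_lt_of_le hr with h | h
  · rw [← h]
    simp [Real.zero_rpow (by positivity : 2 * β ≠ 0)]
  · rw [scaling (by positivity : (0:ℝ) < r ^ 2)]
    congr 1
    rw [← Real.rpow_natCast r 2, ← Real.rpow_mul hr]
    norm_num

lemma negtype {n p : ℕ} {α : ℝ} (hα0 : 0 < α) (hα2 : α ≤ 2)
    (x : Fin n → EuclideanSpace ℝ (Fin p)) (c : Fin n → ℝ) (hc : ∑ k, c k = 0) :
    ∑ k, ∑ l, c k * c l * ‖x k - x l‖ ^ α ≤ 0 := by
  rcases eq_or_lt_of_le hα2 with h2 | h2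
  · -- α = 2
    subst h2
    have hz : ∀ k l : Fin n, ‖x k - x l‖ ^ (2:ℝ)
        = ‖x k‖ ^ 2 - 2 * (inner ℝ (x k) (x l) : ℝ) + ‖x l‖ ^ 2 := by
      intro k l
      rw [show (2:ℝ) = ((2:ℕ):ℝ) by norm_num, Real.rpow_natCast]
      exact norm_sub_sq_real _ _
    have expand : ∀ k l : Fin n,
        c k * c l * (‖x k‖ ^ 2 - 2 * (inner ℝ (x k) (x l) : ℝ) + ‖x l‖ ^ 2)
        = (c k * ‖x k‖ ^ 2) * c l + c k * (c l * ‖x l‖ ^ 2)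
          - 2 * (c k * c l * (inner ℝ (x k) (x l) : ℝ) ^ 1) := by
      intro k l; ring
    simp_rw [hz, expand]
    simp only [Finset.sum_sub_distrib, Finset.sum_add_distrib, ← Finset.mul_sum,
      ← Finset.sum_mul, hc]
    simp only [mul_zero, zero_mul, Finset.sum_const_zero, add_zero, zero_add, zero_sub,
      neg_nonpos]
    nlinarith [inner_pow_pd x c 1]
  · -- 0 < α < 2
    set β : ℝ := α / 2 with hβ
    have hβ0 : 0 < β := by rw [hβ]; linarith
    have hβ1 : β < 1 := by rw [hβ]; linarith
    set I : ℝ := ∫ u in Ioi (0:ℝ), (1 - Real.exp (-u)) * u ^ (-β - 1) with hI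
    have hIpos : 0 < I := I_pos hβ0 hβ1
    have hrep : ∀ k l : Fin n, c k * c l * ‖x k - x l‖ ^ α * I
        = ∫ t in Ioi (0:ℝ),
            c k * c l * ((1 - Real.exp (-(‖x k - x l‖ ^ 2 * t))) * t ^ (-β - 1)) := by
      intro k l
      rw [integral_const_mul, ← rpow_rep hβ0 (norm_nonneg _)]
      have : 2 * β = α := by rw [hβ]; ring
      rw [this]; ring
    have key : (∑ k, ∑ l, c k * c l * ‖x k - x l‖ ^ α) * I ≤ 0 := by
      have e1 : (∑ k, ∑ l, c k * c l * ‖x k - x l‖ ^ α) * I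
          = ∑ k : Fin n, ∑ l : Fin n, c k * c l * ‖x k - x l‖ ^ α * I := by
        rw [Finset.sum_mul]
        exact Finset.sum_congr rfl fun k _ => by rw [Finset.sum_mul]
      rw [e1]
      simp_rw [hrep]
      -- turn double sum into sum over product type
      rw [← Fintype.sum_prod_type
        (f := fun kl : Fin n × Fin n => ∫ t in Ioi (0:ℝ),
          c kl.1 * c kl.2 * ((1 - Real.exp (-(‖x kl.1 - x kl.2‖ ^ 2 * t))) * t ^ (-β - 1)))]
      rw [← integral_finset_sum Finset.univ (fun kl _ =>
        ((integrable_aux hβ0 hβ1 (by positivity : (0:ℝ) ≤ ‖x kl.1 - x kl.2‖ ^ 2)).const_mul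
          (c kl.1 * c kl.2)))]
      refine setIntegral_nonpos measurableSet_Ioi ?_
      intro t ht
      have ht0 : 0 < t := mem_Ioi.mp ht
      have hpow : (0:ℝ) ≤ t ^ (-β - 1) := Real.rpow_nonneg ht0.le _
      have hsum0 : ∑ kl : Fin n × Fin n, c kl.1 * c kl.2 = 0 := by
        rw [Fintype.sum_prod_type (f := fun kl : Fin n × Fin n => c kl.1 * c kl.2)]
        simp_rw [← Finset.mul_sum, hc, mul_zero, Finset.sum_const_zero]
      have hG : 0 ≤ ∑ kl : Fin n × Fin n,
          c kl.1 * c kl.2 * Real.exp (-(‖x kl.1 - x kl.2‖ ^ 2 * t)) := by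
        have := gauss_pd x c ht0.le
        rwa [← Fintype.sum_prod_type
          (f := fun kl : Fin n × Fin n =>
            c kl.1 * c kl.2 * Real.exp (-(‖x kl.1 - x kl.2‖ ^ 2 * t)))] at this
      have expand2 : ∀ kl : Fin n × Fin n,
          c kl.1 * c kl.2 * ((1 - Real.exp (-(‖x kl.1 - x kl.2‖ ^ 2 * t))) * t ^ (-β - 1))
          = (c kl.1 * c kl.2) * t ^ (-β - 1)
            - (c kl.1 * c kl.2 * Real.exp (-(‖x kl.1 - x kl.2‖ ^ 2 * t))) * t ^ (-β - 1) := by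
        intro kl; ring
      simp_rw [expand2, Finset.sum_sub_distrib, ← Finset.sum_mul, hsum0, zero_mul, zero_sub,
        neg_nonpos]
      exact mul_nonneg hG hpow
    calc (∑ k, ∑ l, c k * c l * ‖x k - x l‖ ^ α)
        = (∑ k, ∑ l, c k * c l * ‖x k - x l‖ ^ α) * I * I⁻¹ := by
          field_simp
      _ ≤ 0 := by
          apply mul_nonpos_of_nonpos_of_nonneg key (inv_nonneg.mpr hIpos.le)

lemma quad_eq {n : ℕ} (a A : Matrix (Fin n) (Fin n) ℝ)
    (hA : ∀ k l, A k l =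
      a k l - (1 / (n : ℝ)) * ∑ l', a k l'
            - (1 / (n : ℝ)) * ∑ k', a k' l
            + (1 / (n : ℝ) ^ 2) * ∑ k', ∑ l', a k' l') (v : Fin n → ℝ) :
    ∑ k, ∑ l, v k * v l * A k l
      = ∑ k, ∑ l, (v k - (1 / (n : ℝ)) * ∑ i, v i) * (v l - (1 / (n : ℝ)) * ∑ i, v i)
          * a k l := by
  set U : ℝ := ∑ k, ∑ l, a k l with hU
  set S : ℝ := ∑ i, v i with hS
  -- building blocks
  have e2 : ∑ k, ∑ l, v l * (v k * ∑ l', a k l') = S * ∑ k, v k * ∑ l', a k l' := by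
    rw [Finset.mul_sum]
    refine Finset.sum_congr rfl fun k _ => ?_
    rw [← Finset.sum_mul]
  have e3 : ∑ k, v k * (∑ l, v l * ∑ k', a k' l) = S * ∑ l, v l * ∑ k', a k' l := by
    rw [← Finset.sum_mul]
  have e4 : ∑ k, v k * (∑ l, v l * U) = S * (S * U) := by
    rw [← Finset.sum_mul, ← Finset.sum_mul]
  have e6 : ∑ k, ∑ l, v l * a k l = ∑ l, v l * ∑ k, a k l := by
    rw [Finset.sum_comm]
    exact Finset.sum_congr rfl fun l _ => by rw [← Finset.mul_sum]
  have hL : ∑ k, ∑ l, v k * v l * A k l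
      = (∑ k, ∑ l, v k * v l * a k l)
        - (1 / (n : ℝ)) * (S * ∑ k, v k * ∑ l', a k l')
        - (1 / (n : ℝ)) * (S * ∑ l, v l * ∑ k', a k' l)
        + (1 / (n : ℝ)) ^ 2 * (S * (S * U)) := by
    have expand : ∀ k l, v k * v l * A k l
        = v k * v l * a k l - (1 / (n : ℝ)) * (v l * (v k * ∑ l', a k l'))
          - (1 / (n : ℝ)) * (v k * (v l * ∑ k', a k' l))
          + (1 / (n : ℝ)) ^ 2 * (v k * (v l * U)) := by
      intro k l; rw [hA k l, hU]; ring
    simp only [expand, Finset.sum_sub_distrib, Finset.sum_add_distrib, ← Finset.mul_sum]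
    rw [e2, e3, e4]

  have hR : ∑ k, ∑ l, (v k - (1 / (n : ℝ)) * S) * (v l - (1 / (n : ℝ)) * S) * a k l
      = (∑ k, ∑ l, v k * v l * a k l)
        - ((1 / (n : ℝ)) * S) * (∑ k, v k * ∑ l, a k l)
        - ((1 / (n : ℝ)) * S) * (∑ l, v l * ∑ k, a k l)
        + ((1 / (n : ℝ)) * S) * (((1 / (n : ℝ)) * S) * U) := by
    have expand : ∀ k l, (v k - (1 / (n : ℝ)) * S) * (v l - (1 / (n : ℝ)) * S) * a k l
        = v k * v l * a k l - ((1 / (n : ℝ)) * S) * (v k * a k l)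
          - ((1 / (n : ℝ)) * S) * (v l * a k l)
          + ((1 / (n : ℝ)) * S) * (((1 / (n : ℝ)) * S) * a k l) := by
      intro k l; ring
    simp only [expand, Finset.sum_sub_distrib, Finset.sum_add_distrib, ← Finset.mul_sum]
    rw [e6, ← hU]
  rw [hL, hR]
  ring

-- PSD of the negated double centering
lemma negA_posSemidef {n p : ℕ} {α : ℝ} (hα0 : 0 < α) (hα2 : α ≤ 2)
    (x : Fin n → EuclideanSpace ℝ (Fin p)) (a A : Matrix (Fin n) (Fin n) ℝ)
    (hab : ∀ k l, a k l = ‖x k - x l‖ ^ α)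
    (hA : ∀ k l, A k l =
      a k l - (1 / (n : ℝ)) * ∑ l', a k l'
            - (1 / (n : ℝ)) * ∑ k', a k' l
            + (1 / (n : ℝ) ^ 2) * ∑ k', ∑ l', a k' l') :
    Matrix.PosSemidef (-A) := by
  have hsymm : ∀ k l, a k l = a l k := fun k l => by rw [hab, hab, norm_sub_rev]
  refine Matrix.PosSemidef.of_dotProduct_mulVec_nonneg ?_ ?_
  · -- Hermitian
    ext k l
    simp only [Matrix.conjTranspose_apply, Matrix.neg_apply, star_trivial, neg_inj]
    rw [hA, hA, hsymm l k,
      show ∑ l', a l l' = ∑ k', a k' l from Finset.sum_congr rfl fun i _ => hsymm l i,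
      show ∑ k', a k' k = ∑ l', a k l' from Finset.sum_congr rfl fun i _ => hsymm i k]
    ring
  · intro v
    have hquad : ∑ k, ∑ l, v k * v l * A k l ≤ 0 := by
      rw [quad_eq a A hA v]
      set c : Fin n → ℝ := fun k => v k - (1 / (n : ℝ)) * ∑ i, v i with hcdef
      have hc : ∑ k, c k = 0 := by
        rcases Nat.eq_zero_or_pos n with h | h
        · subst h
          simp
        · have hn : (n:ℝ) ≠ 0 := Nat.cast_ne_zero.mpr h.ne'
          rw [hcdef]
          rw [Finset.sum_sub_distrib, Finset.sum_const, Finset.card_univ, Fintype.card_fin,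
            nsmul_eq_mul]
          field_simp
          ring
      have := negtype hα0 hα2 x c hc
      simp_rw [← hab] at this
      exact this
    have hexpand : dotProduct (star v) ((-A).mulVec v)
        = -∑ k, ∑ l, v k * v l * A k l := by
      simp only [dotProduct, Matrix.mulVec, Matrix.neg_apply,
        star_trivial, Pi.star_apply]
      rw [← Finset.sum_neg_distrib]
      refine Finset.sum_congr rfl fun k _ => ?_
      rw [Finset.mul_sum, ← Finset.sum_neg_distrib]
      refine Finset.sum_congr rfl fun l _ => ?_
      ring
    rw [hexpand]
    linarith

open scoped MatrixOrder in
lemma frob_nonneg {n : ℕ} (A B : Matrix (Fin n) (Fin n) ℝ)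
    (hA : Matrix.PosSemidef (-A)) (hB : Matrix.PosSemidef (-B)) :
    0 ≤ ∑ k, ∑ l, A k l * B k l := by
  obtain ⟨C, hC⟩ := CStarAlgebra.nonneg_iff_eq_star_mul_self.mp hA.nonneg
  obtain ⟨D, hD⟩ := CStarAlgebra.nonneg_iff_eq_star_mul_self.mp hB.nonneg
  have hCe : ∀ k l, (-A) k l = ∑ i, C i k * C i l := by
    intro k l
    rw [hC]
    simp [Matrix.mul_apply, Matrix.star_eq_conjTranspose, Matrix.conjTranspose_apply]
  have hDe : ∀ k l, (-B) k l = ∑ j, D j k * D j l := by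
    intro k l
    rw [hD]
    simp [Matrix.mul_apply, Matrix.star_eq_conjTranspose, Matrix.conjTranspose_apply]
  have key : ∀ k l, A k l * B k l = ∑ i, ∑ j, (C i k * D j k) * (C i l * D j l) := by
    intro k l
    have : A k l * B k l = (-A) k l * (-B) k l := by simp
    rw [this, hCe, hDe, Finset.sum_mul_sum]
    exact Finset.sum_congr rfl fun i _ => Finset.sum_congr rfl fun j _ => by ring
  simp_rw [key]
  -- reorder sums: ∑k∑l∑i∑j → ∑i∑j∑k∑l
  have reorder : ∑ k : Fin n, ∑ l : Fin n, ∑ i : Fin n, ∑ j : Fin n,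
        (C i k * D j k) * (C i l * D j l)
      = ∑ i : Fin n, ∑ j : Fin n, ∑ k : Fin n, ∑ l : Fin n,
        (C i k * D j k) * (C i l * D j l) := by
    conv_lhs => enter [2, k]; rw [Finset.sum_comm]
    rw [Finset.sum_comm]
    refine Finset.sum_congr rfl fun i _ => ?_
    conv_lhs => enter [2, k]; rw [Finset.sum_comm]
    rw [Finset.sum_comm]
  rw [reorder]
  refine Finset.sum_nonneg fun i _ => Finset.sum_nonneg fun j _ => ?_
  have : ∑ k : Fin n, ∑ l : Fin n, (C i k * D j k) * (C i l * D j l)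
      = (∑ k, C i k * D j k) ^ 2 := by
    rw [sq, Finset.sum_mul_sum]
  rw [this]
  exact sq_nonneg _

end Aux

/-- For `0 < α ≤ 2`, points `x₁,…,x_n ∈ ℝᵖ`, `y₁,…,y_n ∈ ℝ^q`,
distance matrices `a_{kl} = ‖x_k − x_l‖₂^α`, `b_{kl} = ‖y_k − y_l‖₂^α` with
double-centerings `A, B`, the empirical α-distance covariance is nonnegative:
`(1/n²) Σ_{k,l} A_{kl} B_{kl} ≥ 0`. -/
theorem empirical_alpha_dcov_nonneg
    (α : ℝ) (hα0 : 0 < α) (hα2 : α ≤ 2)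
    (n p q : ℕ)
    (x : Fin n → EuclideanSpace ℝ (Fin p)) (y : Fin n → EuclideanSpace ℝ (Fin q))
    (a b A B : Matrix (Fin n) (Fin n) ℝ)
    (hab : ∀ k l, a k l = ‖x k - x l‖ ^ α)
    (hbb : ∀ k l, b k l = ‖y k - y l‖ ^ α)
    (hA : ∀ k l, A k l =
      a k l - (1 / (n : ℝ)) * ∑ l', a k l'
            - (1 / (n : ℝ)) * ∑ k', a k' l
            + (1 / (n : ℝ) ^ 2) * ∑ k', ∑ l', a k' l')
    (hB : ∀ k l, B k l =
      b k l - (1 / (n : ℝ)) * ∑ l', b k l'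
            - (1 / (n : ℝ)) * ∑ k', b k' l
            + (1 / (n : ℝ) ^ 2) * ∑ k', ∑ l', b k' l') :
    0 ≤ (1 / (n : ℝ) ^ 2) * ∑ k, ∑ l, A k l * B k l := by
  have hApsd := negA_posSemidef hα0 hα2 x a A hab hA
  have hBpsd := negA_posSemidef hα0 hα2 y b B hbb hB
  have hfrob := frob_nonneg A B hApsd hBpsd
  have h2 : (0:ℝ) ≤ 1 / (n:ℝ) ^ 2 := by positivity
  exact mul_nonneg h2 hfrob
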